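/- Degree formula: the hyperdeterminant $\mathrm{Det}(A) = \det \partial_A$ of a boundary format matrix of format $(k_0+1)\times\cdots\times(k_p+1)$ (with $k_0 = \sum_{i=1}^p k_i$) is a homogeneous polynomial of degree $N_A = \binom{k_0+1}{k_1,\dots,k_p} = \frac{(k_0+1)!}{k_1!\cdots k_p!}$ in the entries of $A$: for any scalar $t$, $\mathrm{Det}(tA) = t^{N_A}\,\mathrm{Det}(A)$. -/

import Mathlib

open scoped BigOperators Classical

/-- The matrix of `∂_A` in the monomial bases of the symmetric powers (see the paper:
`∂_A : V₀^∨ ⊗ S^{m₁}V₁ ⊗ ⋯ ⊗ S^{m_p}V_p → S^{m₁+1}V₁ ⊗ ⋯ ⊗ S^{m_p+1}V_p`). -/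
noncomputable def delM {n₀ : ℕ} {ι : Type} [Fintype ι]
    (n : ι → ℕ) (m : ι → ℕ) (a : Fin n₀ → ((i : ι) → Fin (n i)) → ℂ) :
    Matrix ((i : ι) → Sym (Fin (n i)) (m i + 1))
      (Fin n₀ × ((i : ι) → Sym (Fin (n i)) (m i))) ℂ :=
  fun d x => ∑ j : (i : ι) → Fin (n i),
    if (∀ i, d i = j i ::ₛ x.2 i) then a x.1 j else 0

/-- Telescoping factorial/choose identity. -/
lemma prod_choose_aux (k : ℕ → ℕ) : ∀ p : ℕ,
    (∏ j ∈ Finset.range p, (k (j + 1)).factorial) *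
      ∏ j ∈ Finset.range p,
        ((∑ i ∈ Finset.range j, k (i + 1)) + k (j + 1) + 1).choose
          ((∑ i ∈ Finset.range j, k (i + 1)) + 1)
      = ((∑ i ∈ Finset.range p, k (i + 1)) + 1).factorial := by
  intro p
  induction p with
  | zero => simp
  | succ p ih =>
    rw [Finset.prod_range_succ, Finset.prod_range_succ, Finset.sum_range_succ]
    set M := ∑ i ∈ Finset.range p, k (i + 1) with hM
    have hle : M + 1 ≤ M + k (p + 1) + 1 := by omega
    have := Nat.choose_mul_factorial_mul_factorial hle
    have hsub : M + k (p + 1) + 1 - (M + 1) = k (p + 1) := by omega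
    rw [hsub] at this
    calc (∏ j ∈ Finset.range p, (k (j + 1)).factorial) * (k (p + 1)).factorial *
          ((∏ j ∈ Finset.range p,
            ((∑ i ∈ Finset.range j, k (i + 1)) + k (j + 1) + 1).choose
              ((∑ i ∈ Finset.range j, k (i + 1)) + 1)) *
            (M + k (p + 1) + 1).choose (M + 1))
        = ((∏ j ∈ Finset.range p, (k (j + 1)).factorial) *
            ∏ j ∈ Finset.range p,
              ((∑ i ∈ Finset.range j, k (i + 1)) + k (j + 1) + 1).choose
                ((∑ i ∈ Finset.range j, k (i + 1)) + 1)) *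
            ((M + k (p + 1) + 1).choose (M + 1) * (k (p + 1)).factorial) := by ring
      _ = (M + 1).factorial * ((M + k (p + 1) + 1).choose (M + 1) * (k (p + 1)).factorial) := by
            rw [ih]
      _ = (M + k (p + 1) + 1).factorial := by
            rw [← this]; ring

/-- the hyperdeterminant `Det(A) = det ∂_A` of a boundary format matrix
is homogeneous of degree `N_A = (k₀+1)!/(k₁! ⋯ k_p!)` in the entries of `A`:
`Det(tA) = t^{N_A} Det(A)` (in any fixed identification `e` of the bases of source and
target of `∂_A`). -/
theorem stmt_16 (p : ℕ) (hp : 1 ≤ p) (k : ℕ → ℕ)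
    (hk : k 0 = ∑ i ∈ Finset.range p, k (i + 1))
    (n : Fin p → ℕ) (hn : ∀ i : Fin p, n i = k (i.val + 1) + 1)
    (m : Fin p → ℕ) (hm : ∀ i : Fin p, m i = ∑ i' ∈ Finset.range i.val, k (i' + 1))
    (a : Fin (k 0 + 1) → ((i : Fin p) → Fin (n i)) → ℂ) (t : ℂ) :
    ∀ e : (Fin (k 0 + 1) × ((i : Fin p) → Sym (Fin (n i)) (m i))) ≃
        ((i : Fin p) → Sym (Fin (n i)) (m i + 1)),
      ((delM n m (fun i₀ j => t * a i₀ j)).submatrix e id).det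
        = t ^ ((k 0 + 1).factorial / ∏ i ∈ Finset.range p, (k (i + 1)).factorial)
          * ((delM n m a).submatrix e id).det := by
  intro e
  -- scaling of the matrix
  have hsmul : delM n m (fun i₀ j => t * a i₀ j) = t • delM n m a := by
    ext d x
    simp only [delM, Matrix.smul_apply, smul_eq_mul, Finset.mul_sum, mul_ite, mul_zero]
  have hsub : (delM n m (fun i₀ j => t * a i₀ j)).submatrix e id
      = t • (delM n m a).submatrix e id := by
    rw [hsmul]; rfl
  rw [hsub, Matrix.det_smul]
  congr 2
  -- compute the cardinality
  have hcard := Fintype.card_congr e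
  rw [hcard, Fintype.card_pi]
  have hterm : ∀ i : Fin p, Fintype.card (Sym (Fin (n i)) (m i + 1))
      = ((∑ i' ∈ Finset.range i.val, k (i' + 1)) + k (i.val + 1) + 1).choose
          ((∑ i' ∈ Finset.range i.val, k (i' + 1)) + 1) := by
    intro i
    rw [Sym.card_sym_eq_choose, Fintype.card_fin, hn i, hm i]
    congr 1
    omega
  simp_rw [hterm]
  rw [Fin.prod_univ_eq_prod_range (fun j =>
    ((∑ i' ∈ Finset.range j, k (i' + 1)) + k (j + 1) + 1).choose
      ((∑ i' ∈ Finset.range j, k (i' + 1)) + 1))]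
  have h := prod_choose_aux k p
  rw [← hk] at h
  have hpos : 0 < ∏ i ∈ Finset.range p, (k (i + 1)).factorial :=
    Finset.prod_pos fun i _ => Nat.factorial_pos _
  exact (Nat.div_eq_of_eq_mul_left hpos (h.symm.trans (mul_comm _ _))).symm
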